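/- arXiv:1604.06655 — 3 statements merged into one kernel-verified Lean document; each statement's English description precedes it below -/
import Mathlib

section
/- Let a ≤ b be integers and let w ∈ ℂ with e^w ≠ 1. Then the exponential lattice sum satisfies the exact Euler–MacLaurin identity ∑_{n=a}^{b} e^{n w} = L(w) · ∫_a^b e^{x w} dx + (e^{a w} + e^{b w})/2, where L(w) = (w/2)/tanh(w/2) and ∫_a^b e^{x w} dx = (e^{b w} − e^{a w})/w. In particular, for every natural number N and every w ∈ ℂ with e^w ≠ 1, the interval character χ(e^w) = ∑_{j=0}^{N} e^{j w} equals L(w) ∫_0^N e^{x w} dx + (1 + e^{N w})/2. -/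
lemma tanh_half_eq (w : ℂ) :
    Complex.tanh (w / 2) = (Complex.exp w - 1) / (Complex.exp w + 1) := by
  have hs : Complex.exp (w / 2) ≠ 0 := Complex.exp_ne_zero _
  have hz : Complex.exp w = Complex.exp (w / 2) * Complex.exp (w / 2) := by
    rw [← Complex.exp_add]; ring_nf
  rw [Complex.tanh_eq_sinh_div_cosh]
  have h1 : Complex.sinh (w / 2) = (Complex.exp (w / 2) - Complex.exp (-(w / 2))) / 2 := by
    rw [eq_div_iff (two_ne_zero), mul_comm, Complex.two_sinh]
  have h2 : Complex.cosh (w / 2) = (Complex.exp (w / 2) + Complex.exp (-(w / 2))) / 2 := by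
    rw [eq_div_iff (two_ne_zero), mul_comm, Complex.two_cosh]
  rw [h1, h2, div_div_div_comm, div_self (two_ne_zero' (α := ℂ)), div_one, hz,
    Complex.exp_neg]
  rw [show Complex.exp (w / 2) * Complex.exp (w / 2) - 1
      = Complex.exp (w / 2) * (Complex.exp (w / 2) - (Complex.exp (w / 2))⁻¹) by
        field_simp,
    show Complex.exp (w / 2) * Complex.exp (w / 2) + 1
      = Complex.exp (w / 2) * (Complex.exp (w / 2) + (Complex.exp (w / 2))⁻¹) by
        field_simp,
    mul_div_mul_left _ _ hs]

lemma base_sum (N : ℕ) (w : ℂ) (hw : Complex.exp w ≠ 1) :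
    (∑ j ∈ Finset.range (N + 1), Complex.exp ((j : ℂ) * w)) =
      (w / 2) / Complex.tanh (w / 2) * ((Complex.exp ((N : ℂ) * w) - 1) / w)
        + (1 + Complex.exp ((N : ℂ) * w)) / 2 := by
  have hw0 : w ≠ 0 := by rintro rfl; simp at hw
  set z := Complex.exp w with hz
  have hz1 : z - 1 ≠ 0 := sub_ne_zero.mpr hw
  have hsum : (∑ j ∈ Finset.range (N + 1), Complex.exp ((j : ℂ) * w))
      = (z ^ (N + 1) - 1) / (z - 1) := by
    rw [← geom_sum_eq hw]
    exact Finset.sum_congr rfl fun j _ => Complex.exp_nat_mul w j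
  have hE : Complex.exp ((N : ℂ) * w) = z ^ N := Complex.exp_nat_mul w N
  rw [hsum, hE, tanh_half_eq, ← hz, div_div_eq_mul_div]
  by_cases hm : z + 1 = 0
  · rw [hm, mul_zero, zero_div, zero_mul, zero_add]
    have hzm : z = -1 := by linear_combination hm
    rw [hzm, pow_succ]
    rcases Nat.even_or_odd N with h | h
    · rw [h.neg_one_pow]; norm_num
    · rw [h.neg_one_pow]; norm_num
  · field_simp
    ring

/-- Euler–MacLaurin identity for exponential lattice sums: for integers `a ≤ b` and
`w ∈ ℂ` with `e^w ≠ 1`,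
`∑_{n=a}^{b} e^{nw} = L(w) ∫_a^b e^{xw} dx + (e^{aw} + e^{bw})/2` where
`L(w) = (w/2)/tanh(w/2)` and `∫_a^b e^{xw} dx = (e^{bw} - e^{aw})/w`.
In particular the interval character `χ(e^w) = ∑_{j=0}^N e^{jw}` equals
`L(w) ∫_0^N e^{xw} dx + (1 + e^{Nw})/2`. -/
theorem stmt_0 (a b : ℤ) (hab : a ≤ b) (w : ℂ) (hw : Complex.exp w ≠ 1) :
    (∑ n ∈ Finset.Icc a b, Complex.exp ((n : ℂ) * w)) =
        (w / 2) / Complex.tanh (w / 2) *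
            (∫ x : ℝ in (a : ℝ)..(b : ℝ), Complex.exp ((x : ℂ) * w))
          + (Complex.exp ((a : ℂ) * w) + Complex.exp ((b : ℂ) * w)) / 2 ∧
      (∫ x : ℝ in (a : ℝ)..(b : ℝ), Complex.exp ((x : ℂ) * w))
          = (Complex.exp ((b : ℂ) * w) - Complex.exp ((a : ℂ) * w)) / w ∧
      ∀ N : ℕ, (∑ j ∈ Finset.range (N + 1), Complex.exp ((j : ℂ) * w)) =
        (w / 2) / Complex.tanh (w / 2) *
            (∫ x : ℝ in (0 : ℝ)..(N : ℝ), Complex.exp ((x : ℂ) * w))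
          + (1 + Complex.exp ((N : ℂ) * w)) / 2 := by
  have hw0 : w ≠ 0 := by rintro rfl; simp at hw
  have hint : ∀ u v : ℝ, (∫ x : ℝ in u..v, Complex.exp ((x : ℂ) * w))
      = (Complex.exp ((v : ℂ) * w) - Complex.exp ((u : ℂ) * w)) / w := by
    intro u v
    have := integral_exp_mul_complex (a := u) (b := v) hw0
    simp only [mul_comm w] at this
    exact this
  refine ⟨?_, hint a b, fun N => ?_⟩
  · -- main identity over Icc a b
    set n : ℕ := (b - a).toNat with hn
    have hna : (n : ℤ) = b - a := Int.toNat_of_nonneg (by omega)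
    have hmap : Finset.Icc a b = (Finset.Icc (0 : ℤ) n).map (addLeftEmbedding a) := by
      rw [Finset.map_add_left_Icc]; congr 1 <;> omega
    have h0 : Finset.Icc (0 : ℤ) (n : ℤ)
        = (Finset.range (n + 1)).map ⟨Int.ofNat, fun x y h => by simpa using h⟩ := by
      ext m
      simp only [Finset.mem_Icc, Finset.mem_map, Finset.mem_range,
        Function.Embedding.coeFn_mk, Int.ofNat_eq_natCast]
      constructor
      · rintro ⟨h1, h2⟩; exact ⟨m.toNat, by omega, by change ((m.toNat : ℕ) : ℤ) = m; omega⟩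
      · rintro ⟨k, hk, rfl⟩; change 0 ≤ (k : ℤ) ∧ (k : ℤ) ≤ n; omega
    have hreidx : (∑ m ∈ Finset.Icc a b, Complex.exp ((m : ℂ) * w))
        = Complex.exp ((a : ℂ) * w) * ∑ j ∈ Finset.range (n + 1), Complex.exp ((j : ℂ) * w) := by
      rw [hmap, h0, Finset.sum_map, Finset.sum_map, Finset.mul_sum]
      refine Finset.sum_congr rfl fun j _ => ?_
      simp only [addLeftEmbedding_apply, Function.Embedding.coeFn_mk, Int.ofNat_eq_natCast]
      change Complex.exp (((a + (j : ℤ) : ℤ) : ℂ) * w) = _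
      push_cast
      rw [← Complex.exp_add]; ring_nf
    rw [hreidx, base_sum n w hw, hint a b]
    have hNb : Complex.exp ((a : ℂ) * w) * Complex.exp ((n : ℂ) * w) = Complex.exp ((b : ℂ) * w) := by
      rw [← Complex.exp_add]
      congr 1
      have : ((n : ℤ) : ℂ) = (b : ℂ) - a := by exact_mod_cast congrArg (Int.cast : ℤ → ℂ) hna
      push_cast at this ⊢
      rw [this]; ring
    push_cast
    linear_combination ((w / 2) / Complex.tanh (w / 2) / w + 1 / 2) * hNb
  · rw [base_sum N w hw, hint 0 N]
    norm_num
end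

section
/- Fix E > 0, β ∈ ℝ and C ≥ 0, let (j_k)_{k ≥ 1} be a sequence of natural numbers with |j_k − k E| ≤ C for all k, and set λ_k = k E e^{2β/√k}. Then lim_{k→∞} √k · (λ_k)^{j_k} e^{−λ_k} / (j_k)! = (2π E)^{−1/2} e^{−2 E β²}. Equivalently, for any m ≥ 1 and z_E ∈ ℂ^m with ‖z_E‖² = E, the Bargmann–Fock equivariant Bergman density at the scaled points z_k = e^{β/√k} z_E satisfies lim_{k→∞} k^{1/2 − m} B_{k,j_k}(z_k) = (2π E)^{−1/2} e^{−2 E β²}. -/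
open Filter Real

set_option maxHeartbeats 1000000

private lemma BF_tendsto_of_abs_sub_le {f g : ℕ → ℝ} {L : ℝ}
    (h : ∀ᶠ k in atTop, |f k - L| ≤ g k) (hg : Tendsto g atTop (nhds 0)) :
    Tendsto f atTop (nhds L) :=
  tendsto_sub_nhds_zero_iff.1 (squeeze_zero_norm' (by simpa using h) hg)

private lemma BF_sqrt_tendsto : Tendsto (fun k : ℕ => Real.sqrt k) atTop atTop := by
  have h : Tendsto (fun x : ℝ => Real.sqrt x) atTop atTop := by
    refine tendsto_atTop_atTop.2 fun b => ⟨(max b 0) ^ 2, fun a ha => ?_⟩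
    calc b ≤ max b 0 := le_max_left _ _
      _ = Real.sqrt ((max b 0) ^ 2) := (Real.sqrt_sq (le_max_right _ _)).symm
      _ ≤ Real.sqrt a := Real.sqrt_le_sqrt ha
  exact h.comp tendsto_natCast_atTop_atTop

private lemma BF_const_div_sqrt (c : ℝ) :
    Tendsto (fun k : ℕ => c / Real.sqrt k) atTop (nhds 0) :=
  tendsto_const_nhds.div_atTop BF_sqrt_tendsto

/-- Main limit: `√k λ_k^{j_k} e^{-λ_k}/(j_k)! → e^{-2Eβ²}/√(2πE)`. -/
private lemma BF_main (E : ℝ) (hE : 0 < E) (β C : ℝ) (hC : 0 ≤ C) (j : ℕ → ℕ)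
    (hj : ∀ k : ℕ, 1 ≤ k → |(j k : ℝ) - k * E| ≤ C) :
    Tendsto
      (fun k : ℕ =>
        Real.sqrt k * ((k : ℝ) * E * Real.exp (2 * β / Real.sqrt k)) ^ (j k)
            * Real.exp (-((k : ℝ) * E * Real.exp (2 * β / Real.sqrt k)))
          / (Nat.factorial (j k) : ℝ))
      atTop (nhds (Real.exp (-(2 * E * β ^ 2)) / Real.sqrt (2 * Real.pi * E))) := by
  set Lam : ℕ → ℝ := fun k => (k : ℝ) * E * Real.exp (2 * β / Real.sqrt k) with hLam
  -- basic eventual facts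
  have hk1 : ∀ᶠ k : ℕ in atTop, 1 ≤ k := eventually_ge_atTop 1
  have hjlb : ∀ᶠ k : ℕ in atTop, (k : ℝ) * E - C ≤ (j k : ℝ) := by
    filter_upwards [hk1] with k hk
    have := hj k hk
    have := abs_le.1 this
    linarith [this.1]
  have hjub : ∀ᶠ k : ℕ in atTop, (j k : ℝ) ≤ (k : ℝ) * E + C := by
    filter_upwards [hk1] with k hk
    have := abs_le.1 (hj k hk)
    linarith [this.2]
  have hjR_top : Tendsto (fun k : ℕ => (j k : ℝ)) atTop atTop := by
    refine tendsto_atTop_mono' atTop hjlb ?_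
    have h1 : Tendsto (fun k : ℕ => (k : ℝ) * E) atTop atTop :=
      tendsto_natCast_atTop_atTop.atTop_mul_const hE
    simpa [sub_eq_add_neg] using tendsto_atTop_add_const_right atTop (-C) h1
  have hj_top : Tendsto j atTop atTop := tendsto_natCast_atTop_iff.1 hjR_top
  have hj1 : ∀ᶠ k : ℕ in atTop, 1 ≤ j k := hj_top.eventually_ge_atTop 1
  -- a k := (Lam k - j k)/√k  → 2βE
  set a : ℕ → ℝ := fun k => (Lam k - j k) / Real.sqrt k with ha_def
  have ha : Tendsto a atTop (nhds (2 * β * E)) := by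
    refine BF_tendsto_of_abs_sub_le (g := fun k => (4 * β ^ 2 * E + C) / Real.sqrt k)
      ?_ (BF_const_div_sqrt _)
    filter_upwards [hk1, BF_sqrt_tendsto.eventually_ge_atTop (2 * |β| + 1)] with k hk hsk
    have hk0 : (0 : ℝ) < k := by exact_mod_cast hk
    have hs0 : (0 : ℝ) < Real.sqrt k := Real.sqrt_pos.2 hk0
    set x := 2 * β / Real.sqrt k with hx_def
    have hxabs : |x| ≤ 1 := by
      rw [hx_def, abs_div, abs_of_pos hs0]
      rw [div_le_one hs0]
      calc |2 * β| = 2 * |β| := by rw [abs_mul]; norm_num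
        _ ≤ 2 * |β| + 1 := by linarith
        _ ≤ Real.sqrt k := hsk
    have hkx : (k : ℝ) * x = 2 * β * Real.sqrt k := by
      rw [hx_def, mul_div_assoc']
      rw [show (k : ℝ) * (2 * β) = 2 * β * k by ring, mul_div_assoc, Real.div_sqrt]
    have hx2 : x ^ 2 = 4 * β ^ 2 / k := by
      rw [hx_def, div_pow, Real.sq_sqrt hk0.le]; ring
    have hnum : Lam k - j k - 2 * β * E * Real.sqrt k
        = (k : ℝ) * E * (Real.exp x - 1 - x) - ((j k : ℝ) - k * E) := by
      simp only [hLam]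
      linarith [congrArg (fun y => E * y) hkx, mul_comm ((k:ℝ)*E) x]
    have hbound : |Lam k - j k - 2 * β * E * Real.sqrt k| ≤ 4 * β ^ 2 * E + C := by
      rw [hnum]
      calc |(k : ℝ) * E * (Real.exp x - 1 - x) - ((j k : ℝ) - k * E)|
          ≤ |(k : ℝ) * E * (Real.exp x - 1 - x)| + |(j k : ℝ) - k * E| := abs_sub _ _
        _ ≤ (k : ℝ) * E * x ^ 2 + C := by
            refine add_le_add ?_ (hj k hk)
            rw [abs_mul, abs_of_nonneg (by positivity : (0:ℝ) ≤ (k:ℝ) * E)]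
            exact mul_le_mul_of_nonneg_left (Real.abs_exp_sub_one_sub_id_le hxabs)
              (by positivity)
        _ = 4 * β ^ 2 * E + C := by
            rw [hx2]; field_simp
    have : a k - 2 * β * E = (Lam k - j k - 2 * β * E * Real.sqrt k) / Real.sqrt k := by
      simp only [ha_def]; field_simp
    rw [this, abs_div, abs_of_pos hs0]
    exact div_le_div_of_nonneg_right hbound hs0.le |>.trans_eq rfl
  -- (j k)/k → E and k/(j k) → E⁻¹
  have hjE : Tendsto (fun k : ℕ => (j k : ℝ) / k) atTop (nhds E) := by
    refine BF_tendsto_of_abs_sub_le (g := fun k => C / (k : ℝ)) ?_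
      (tendsto_const_div_atTop_nhds_zero_nat C)
    filter_upwards [hk1] with k hk
    have hk0 : (0 : ℝ) < k := by exact_mod_cast hk
    have : (j k : ℝ) / k - E = ((j k : ℝ) - k * E) / k := by field_simp
    rw [this, abs_div, abs_of_pos hk0]
    exact div_le_div_of_nonneg_right (hj k hk) hk0.le
  have hb : Tendsto (fun k : ℕ => (k : ℝ) / j k) atTop (nhds E⁻¹) := by
    have := hjE.inv₀ hE.ne'
    simpa [inv_div] using this
  -- core: G k := j log(Lam/j) + (j - Lam) → -(2Eβ²)
  set A : ℝ := |2 * β * E| + 1 with hA_def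
  have hA0 : 0 < A := by positivity
  have haA : ∀ᶠ k : ℕ in atTop, |a k| < A := by
    refine (ha.abs).eventually_lt_const ?_
    rw [hA_def]; linarith [abs_nonneg (2 * β * E)]
  have hkE2 : Tendsto (fun k : ℕ => (k : ℝ) * E / 2) atTop atTop := by
    simpa [mul_div_assoc] using tendsto_natCast_atTop_atTop.atTop_mul_const (half_pos hE)
  have hjhalf : ∀ᶠ k : ℕ in atTop, (k : ℝ) * E / 2 ≤ (j k : ℝ) := by
    filter_upwards [hjlb, hkE2.eventually_ge_atTop C] with k h1 h2
    linarith
  have hk2j : Tendsto (fun k : ℕ => (k : ℝ) / (2 * j k)) atTop (nhds (E⁻¹ / 2)) := by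
    have h := hb.div_const 2
    refine h.congr fun k => ?_
    rw [div_div]; ring_nf
  have hG : Tendsto (fun k : ℕ => (j k : ℝ) * Real.log (Lam k / j k) + ((j k : ℝ) - Lam k))
      atTop (nhds (-(2 * E * β ^ 2))) := by
    have hX : Tendsto (fun k : ℕ => -((a k) ^ 2 * ((k : ℝ) / (2 * j k)))) atTop
        (nhds (-(2 * E * β ^ 2))) := by
      have h1 : Tendsto (fun k : ℕ => (a k) ^ 2) atTop (nhds ((2 * β * E) ^ 2)) :=
        ha.pow 2
      have h := (h1.mul hk2j).neg
      convert h using 2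
      field_simp
    have hR : Tendsto (fun k : ℕ =>
        ((j k : ℝ) * Real.log (Lam k / j k) + ((j k : ℝ) - Lam k))
          + (a k) ^ 2 * ((k : ℝ) / (2 * j k))) atTop (nhds 0) := by
      refine squeeze_zero_norm' ?_ (BF_const_div_sqrt (16 * A ^ 3 * (E + C) / E ^ 3))
      filter_upwards [hk1, hj1, haA, hjhalf, hjub,
        BF_sqrt_tendsto.eventually_ge_atTop (4 * A / E)] with k hk hjk1 hak hjh hju hsk
      have hk0 : (0 : ℝ) < k := by exact_mod_cast hk
      have hs0 : (0 : ℝ) < Real.sqrt k := Real.sqrt_pos.2 hk0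
      have hj0 : (0 : ℝ) < (j k : ℝ) := by positivity
      have hjne : (j k : ℝ) ≠ 0 := hj0.ne'
      have hsq : Real.sqrt k * Real.sqrt k = k := Real.mul_self_sqrt hk0.le
      set t : ℝ := (Lam k - j k) / (j k) with ht_def
      have hd : Lam k - (j k : ℝ) = a k * Real.sqrt k := by
        rw [ha_def]; field_simp
      have htabs : |t| ≤ 2 * A / (E * Real.sqrt k) := by
        rw [ht_def, abs_div, abs_of_pos hj0, hd, abs_mul, abs_of_pos hs0]
        rw [div_le_div_iff₀ hj0 (by positivity)]
        have h1 : |a k| * Real.sqrt k * (E * Real.sqrt k) = |a k| * E * k := by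
          rw [show |a k| * Real.sqrt k * (E * Real.sqrt k)
              = |a k| * E * (Real.sqrt k * Real.sqrt k) by ring, hsq]
        rw [h1]
        have h2 : |a k| * E * k ≤ A * E * k :=
          mul_le_mul_of_nonneg_right (mul_le_mul_of_nonneg_right hak.le hE.le) hk0.le
        have h3 : 2 * A * ((k : ℝ) * E / 2) ≤ 2 * A * (j k : ℝ) :=
          mul_le_mul_of_nonneg_left hjh (by positivity)
        nlinarith
      have hthalf : |t| ≤ 1 / 2 := by
        refine htabs.trans ?_
        have h4A : 4 * A ≤ √(k : ℝ) * E := (div_le_iff₀ hE).1 hsk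
        rw [div_le_div_iff₀ (by positivity) (by norm_num)]
        nlinarith
      have htlt : |(-t)| < 1 := by rw [abs_neg]; linarith [hthalf]
      have hlog := Real.abs_log_sub_add_sum_range_le htlt 2
      have hsum2 : ∑ i ∈ Finset.range 2, (-t) ^ (i + 1) / ((i : ℝ) + 1) = -t + t ^ 2 / 2 := by
        simp [Finset.sum_range_succ]
        ring
      rw [hsum2] at hlog
      have h1mt : 1 - (-t) = 1 + t := by ring
      rw [h1mt, abs_neg] at hlog
      -- hlog : |(-t + t^2/2) + log (1+t)| ≤ |t|^3 / (1 - |t|)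
      have hLj : Lam k / j k = 1 + t := by
        rw [ht_def]; field_simp; ring
      have hexpr : (j k : ℝ) * Real.log (Lam k / j k) + ((j k : ℝ) - Lam k)
          + (a k) ^ 2 * ((k : ℝ) / (2 * j k))
          = (j k : ℝ) * ((-t + t ^ 2 / 2) + Real.log (1 + t)) := by
        rw [hLj, ht_def]
        have ha2 : (a k) ^ 2 = (Lam k - j k) ^ 2 / k := by
          rw [ha_def]
          rw [div_pow, Real.sq_sqrt hk0.le]
        rw [ha2]
        field_simp
        ring
      rw [Real.norm_eq_abs, hexpr, abs_mul, abs_of_pos hj0]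
      have hstep1 : |(-t + t ^ 2 / 2) + Real.log (1 + t)| ≤ 2 * |t| ^ 3 := by
        refine hlog.trans ?_
        have h12 : (1 : ℝ) / 2 ≤ 1 - |t| := by linarith
        calc |t| ^ 3 / (1 - |t|) ≤ |t| ^ 3 / (1 / 2) :=
              div_le_div_of_nonneg_left (by positivity) (by norm_num) h12
          _ = 2 * |t| ^ 3 := by ring
      have hu : |t| ^ 3 ≤ (2 * A / (E * Real.sqrt k)) ^ 3 :=
        pow_le_pow_left₀ (abs_nonneg t) htabs 3
      have hcube : (2 * A / (E * Real.sqrt k)) ^ 3 = 8 * A ^ 3 / (E ^ 3 * (k * Real.sqrt k)) := by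
        rw [div_pow]
        congr 1
        · ring
        · have : (Real.sqrt k) ^ 3 = k * Real.sqrt k := by
            rw [pow_succ, Real.sq_sqrt hk0.le]
          rw [mul_pow, this]
      have hjk' : (j k : ℝ) ≤ k * (E + C) := by
        have : C ≤ (k : ℝ) * C := le_mul_of_one_le_left hC (by exact_mod_cast hk)
        nlinarith
      calc (j k : ℝ) * |(-t + t ^ 2 / 2) + Real.log (1 + t)|
          ≤ (j k : ℝ) * (2 * |t| ^ 3) :=
            mul_le_mul_of_nonneg_left hstep1 hj0.le
        _ ≤ (k * (E + C)) * (2 * (8 * A ^ 3 / (E ^ 3 * (k * Real.sqrt k)))) := by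
            have h1 : (2 : ℝ) * |t| ^ 3 ≤ 2 * (8 * A ^ 3 / (E ^ 3 * (k * Real.sqrt k))) := by
              rw [← hcube]
              linarith [hu]
            exact mul_le_mul hjk' h1 (by positivity) (by positivity)
        _ = 16 * A ^ 3 * (E + C) / E ^ 3 / Real.sqrt k := by
            field_simp
            ring
    have h := hR.add hX
    simpa using h
  -- assemble the three factors
  have hF3 : Tendsto (fun k : ℕ => (Lam k / j k) ^ (j k) * Real.exp ((j k : ℝ) - Lam k))
      atTop (nhds (Real.exp (-(2 * E * β ^ 2)))) := by
    have hcont := (Real.continuous_exp.tendsto _).comp hG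
    refine hcont.congr' ?_
    filter_upwards [hk1, hj1] with k hk hjk1
    have hk0 : (0 : ℝ) < k := by exact_mod_cast hk
    have hj0 : (0 : ℝ) < (j k : ℝ) := by positivity
    have hL0 : 0 < Lam k := by rw [hLam]; positivity
    have hLj0 : 0 < Lam k / j k := div_pos hL0 hj0
    show Real.exp _ = _
    rw [Real.exp_add, Real.exp_nat_mul, Real.exp_log hLj0]
  have hF2 : Tendsto (fun k : ℕ => Real.sqrt k / Real.sqrt (2 * j k)) atTop
      (nhds (Real.sqrt (E⁻¹ / 2))) := by
    have h := hk2j.sqrt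
    refine h.congr fun k => ?_
    rw [Real.sqrt_div (Nat.cast_nonneg k)]
  have hπ0 : (0 : ℝ) < Real.sqrt Real.pi := Real.sqrt_pos.2 Real.pi_pos
  have hF1 : Tendsto (fun k : ℕ => 1 / Stirling.stirlingSeq (j k)) atTop
      (nhds (1 / Real.sqrt Real.pi)) := by
    have h := (Stirling.tendsto_stirlingSeq_sqrt_pi.comp hj_top).inv₀ hπ0.ne'
    simpa [one_div] using h
  have hprod := (hF1.mul hF2).mul hF3
  have hval : 1 / Real.sqrt Real.pi * Real.sqrt (E⁻¹ / 2) * Real.exp (-(2 * E * β ^ 2))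
      = Real.exp (-(2 * E * β ^ 2)) / Real.sqrt (2 * Real.pi * E) := by
    have h2E : (0 : ℝ) < Real.sqrt (2 * E) := Real.sqrt_pos.2 (by linarith)
    have h1 : Real.sqrt (E⁻¹ / 2) = (Real.sqrt (2 * E))⁻¹ := by
      rw [show E⁻¹ / 2 = (2 * E)⁻¹ by rw [mul_inv]; ring, Real.sqrt_inv]
    have h2 : Real.sqrt (2 * Real.pi * E) = Real.sqrt Real.pi * Real.sqrt (2 * E) := by
      rw [show 2 * Real.pi * E = Real.pi * (2 * E) by ring, Real.sqrt_mul Real.pi_pos.le]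
    rw [h1, h2]
    field_simp
  rw [← hval]
  refine hprod.congr' ?_
  filter_upwards [hk1, hj1] with k hk hjk1
  have hk0 : (0 : ℝ) < k := by exact_mod_cast hk
  have hj0 : (0 : ℝ) < (j k : ℝ) := by positivity
  have hs0 : (0 : ℝ) < Real.sqrt k := Real.sqrt_pos.2 hk0
  have h2j0 : (0 : ℝ) < Real.sqrt (2 * j k) := Real.sqrt_pos.2 (by positivity)
  have hfact : ((j k).factorial : ℝ) ≠ 0 := Nat.cast_ne_zero.2 (Nat.factorial_ne_zero _)
  have hjj : ((j k : ℝ)) ^ (j k) ≠ 0 := pow_ne_zero _ hj0.ne'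
  rw [Stirling.stirlingSeq, one_div_div]
  rw [show ((j k : ℝ)) - Lam k = (j k : ℝ) + (-(Lam k)) by ring, Real.exp_add]
  rw [div_pow (Lam k), div_pow ((j k : ℝ)), Real.exp_one_pow]
  field_simp
  ring

/-- √k-scaling asymptotics for the Bargmann–Fock equivariant Bergman density:
for `E > 0`, `β ∈ ℝ`, `C ≥ 0`, natural numbers `j_k` with `|j_k - kE| ≤ C`, and
`λ_k = kE e^{2β/√k}`, one has `√k λ_k^{j_k} e^{-λ_k}/(j_k)! → (2πE)^{-1/2} e^{-2Eβ²}`;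
equivalently, for any `m ≥ 1` and `z_E ∈ ℂ^m` with `‖z_E‖² = E`, at the scaled points
`z_k = e^{β/√k} z_E` one has `k^{1/2-m} B_{k,j_k}(z_k) → (2πE)^{-1/2} e^{-2Eβ²}`. -/
theorem stmt_6 (E : ℝ) (hE : 0 < E) (β : ℝ) (C : ℝ) (hC : 0 ≤ C) (j : ℕ → ℕ)
    (hj : ∀ k : ℕ, 1 ≤ k → |(j k : ℝ) - k * E| ≤ C) :
    Filter.Tendsto
        (fun k : ℕ =>
          Real.sqrt k * ((k : ℝ) * E * Real.exp (2 * β / Real.sqrt k)) ^ (j k)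
              * Real.exp (-((k : ℝ) * E * Real.exp (2 * β / Real.sqrt k)))
            / (Nat.factorial (j k) : ℝ))
        Filter.atTop
        (nhds (Real.exp (-(2 * E * β ^ 2)) / Real.sqrt (2 * Real.pi * E))) ∧
      ∀ m : ℕ, 1 ≤ m → ∀ zE : Fin m → ℂ, (∑ i, ‖zE i‖ ^ 2) = E →
        Filter.Tendsto
          (fun k : ℕ =>
            (k : ℝ) ^ ((1 : ℝ) / 2 - m) *
              ((k : ℝ) ^ m *
                  ((k : ℝ) * ∑ i, ‖(Real.exp (β / Real.sqrt k) : ℂ) * zE i‖ ^ 2)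
                      ^ (j k) *
                  Real.exp
                    (-((k : ℝ) *
                        ∑ i, ‖(Real.exp (β / Real.sqrt k) : ℂ) * zE i‖ ^ 2)) /
                (Nat.factorial (j k) : ℝ)))
          Filter.atTop
          (nhds (Real.exp (-(2 * E * β ^ 2)) / Real.sqrt (2 * Real.pi * E))) := by
  refine ⟨BF_main E hE β C hC j hj, ?_⟩
  intro m hm zE hz
  refine (BF_main E hE β C hC j hj).congr' ?_
  filter_upwards [eventually_ge_atTop 1] with k hk
  have hk0 : (0 : ℝ) < k := by exact_mod_cast hk
  have hsum : (∑ i, ‖(Real.exp (β / Real.sqrt k) : ℂ) * zE i‖ ^ 2)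
      = Real.exp (2 * β / Real.sqrt k) * E := by
    rw [← hz, Finset.mul_sum]
    refine Finset.sum_congr rfl fun i _ => ?_
    rw [norm_mul, Complex.norm_real, Real.norm_eq_abs, abs_of_pos (Real.exp_pos _), mul_pow]
    congr 1
    rw [sq, ← Real.exp_add]
    congr 1
    ring
  have hck : (k : ℝ) ^ ((1 : ℝ) / 2 - m) * (k : ℝ) ^ m = Real.sqrt k := by
    rw [← Real.rpow_natCast (k : ℝ) m, ← Real.rpow_add hk0, Real.sqrt_eq_rpow]
    norm_num
  show _ = _
  rw [hsum]
  have harg : (k : ℝ) * (Real.exp (2 * β / Real.sqrt k) * E)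
      = (k : ℝ) * E * Real.exp (2 * β / Real.sqrt k) := by ring
  rw [harg, ← hck]
  ring
end

section
/- Fix real numbers 0 < E < r. For each integer k ≥ 1 let j_k = ⌈kE⌉ − 1 (the largest integer strictly less than kE). Then lim_{k→∞} √(2π k E) · (1 − E/r) · (j_k)^{j_k} e^{−j_k} (k r)^{−j_k} · ∑_{j=0}^{j_k} (k r)^j / j! = 1. Equivalently, the Poisson-type partial sum satisfies e^{−kr} ∑_{j=0}^{j_k} (kr)^j/j! = (2πkE)^{−1/2} (1 − E/r)^{−1} e^{−k b_k} (1 + o(1)) as k → ∞, where b_k = r − j_k/k − (j_k/k)·log(kr/j_k). -/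
open Filter Real Finset

lemma my_stirling : Tendsto (fun n : ℕ => Real.sqrt (2 * Real.pi * n) * (n:ℝ)^n * Real.exp (-(n:ℝ)) / (Nat.factorial n : ℝ)) atTop (nhds 1) := by
  have hπ : Real.sqrt Real.pi ≠ 0 := by positivity
  have h := Stirling.tendsto_stirlingSeq_sqrt_pi
  have h2 : Tendsto (fun n : ℕ => Real.sqrt Real.pi / Stirling.stirlingSeq n) atTop (nhds 1) := by
    have := (tendsto_const_nhds (α := ℕ) (f := atTop) (x := Real.sqrt Real.pi)).div h hπ
    rw [div_self hπ] at this; exact this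
  refine h2.congr' ?_
  filter_upwards [eventually_ge_atTop 1] with n hn
  have hn0 : (0:ℝ) < n := by exact_mod_cast hn
  rw [Stirling.stirlingSeq, div_div_eq_mul_div]
  have hsqrt : Real.sqrt (2 * Real.pi * n) = Real.sqrt Real.pi * Real.sqrt (2 * n) := by
    rw [← Real.sqrt_mul (by positivity)]
    ring_nf
  have hexp : Real.exp (n:ℝ) = Real.exp 1 ^ n := by
    rw [← Real.exp_nat_mul, mul_one]
  have hpow : ((n:ℝ) / Real.exp 1) ^ n = (n:ℝ)^n * Real.exp (-(n:ℝ)) := by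
    rw [div_pow, Real.exp_neg, hexp, div_eq_mul_inv]
  rw [hsqrt, hpow]
  ring

-- cast of descFactorial as a real product
lemma my_cast_desc (n l : ℕ) (h : l ≤ n) :
    ((n.descFactorial l : ℕ) : ℝ) = ∏ i ∈ Finset.range l, ((n:ℝ) - (i:ℝ)) := by
  rw [Nat.descFactorial_eq_prod_range, Nat.cast_prod]
  refine Finset.prod_congr rfl fun i hi => ?_
  rw [Finset.mem_range] at hi
  rw [Nat.cast_sub (le_of_lt (lt_of_lt_of_le hi h))]

section main
variable {E r : ℝ} (hE : 0 < E) (hEr : E < r) (jk : ℕ → ℕ)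
  (hjk : ∀ k : ℕ, jk k = ⌈(k : ℝ) * E⌉₊ - 1)

include hE hjk in
lemma jk_bounds : ∀ k : ℕ, 1 ≤ k → (k:ℝ) * E - 1 ≤ (jk k : ℝ) ∧ ((jk k : ℝ) < (k:ℝ) * E) := by
  intro k hk
  have hk0 : (0:ℝ) < (k:ℝ) * E := by
    have : (0:ℝ) < (k:ℝ) := by exact_mod_cast hk
    positivity
  have hc1 : 1 ≤ ⌈(k : ℝ) * E⌉₊ := Nat.one_le_ceil_iff.mpr hk0
  have hcast : (jk k : ℝ) = (⌈(k : ℝ) * E⌉₊ : ℝ) - 1 := by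
    rw [hjk k, Nat.cast_sub hc1, Nat.cast_one]
  constructor
  · rw [hcast]; linarith [Nat.le_ceil ((k:ℝ) * E)]
  · rw [hcast]
    have := Nat.ceil_lt_add_one (le_of_lt hk0)
    linarith

include hE hjk in
lemma jk_div_tendsto : Tendsto (fun k : ℕ => (jk k : ℝ) / k) atTop (nhds E) := by
  have hlo : Tendsto (fun k : ℕ => E - 1 / (k:ℝ)) atTop (nhds E) := by
    have : Tendsto (fun n : ℕ => 1 / (n:ℝ)) atTop (nhds 0) := tendsto_one_div_atTop_nhds_zero_nat
    simpa using (tendsto_const_nhds (x := E)).sub this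
  refine tendsto_of_tendsto_of_tendsto_of_le_of_le' hlo tendsto_const_nhds ?_ ?_
  · filter_upwards [eventually_ge_atTop 1] with k hk
    have hk0 : (0:ℝ) < (k:ℝ) := by exact_mod_cast hk
    have := (jk_bounds hE jk hjk k hk).1
    rw [le_div_iff₀ hk0]
    have h2 : (E - 1/(k:ℝ)) * k = (k:ℝ)*E - 1 := by field_simp
    linarith
  · filter_upwards [eventually_ge_atTop 1] with k hk
    have hk0 : (0:ℝ) < (k:ℝ) := by exact_mod_cast hk
    have := (jk_bounds hE jk hjk k hk).2
    exact le_of_lt (by rw [div_lt_iff₀ hk0]; linarith [this])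

include hE hjk in
lemma jk_atTop : Tendsto jk atTop atTop := by
  rw [← tendsto_natCast_atTop_iff (R := ℝ)]
  have hlo : Tendsto (fun k : ℕ => (k:ℝ) * E - 1) atTop atTop := by
    exact tendsto_atTop_add_const_right _ _ (tendsto_natCast_atTop_atTop.atTop_mul_const hE)
  refine tendsto_atTop_mono' _ ?_ hlo
  filter_upwards [eventually_ge_atTop 1] with k hk
  exact (jk_bounds hE jk hjk k hk).1

end main

section geo
variable {E r : ℝ} (hE : 0 < E) (hEr : E < r) (jk : ℕ → ℕ)
  (hjk : ∀ k : ℕ, jk k = ⌈(k : ℝ) * E⌉₊ - 1)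

include hE hEr hjk in
lemma geo_tendsto :
    Tendsto (fun k : ℕ => ∑ l ∈ Finset.range (jk k + 1),
        ((jk k).descFactorial l : ℝ) / ((k:ℝ)*r)^l) atTop (nhds (1 - E/r)⁻¹) := by
  have hr : 0 < r := hE.trans hEr
  have hq0 : 0 ≤ E / r := by positivity
  have hq1 : E / r < 1 := (div_lt_one hr).mpr hEr
  have hab : ∀ l : ℕ, Tendsto (fun k : ℕ => ((jk k).descFactorial l : ℝ) / ((k:ℝ)*r)^l)
      atTop (nhds ((E/r)^l)) := by
    intro l
    have hfac : ∀ i : ℕ, Tendsto (fun k : ℕ => ((jk k : ℝ) - (i:ℝ)) / ((k:ℝ)*r))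
        atTop (nhds (E/r)) := by
      intro i
      have h1 : Tendsto (fun k : ℕ => ((jk k:ℝ)/k - (i:ℝ)/k)/r) atTop (nhds ((E - 0)/r)) :=
        ((jk_div_tendsto hE jk hjk).sub (tendsto_const_div_atTop_nhds_zero_nat (i:ℝ))).div_const r
      rw [sub_zero] at h1
      refine h1.congr' ?_
      filter_upwards [eventually_ge_atTop 1] with k hk
      have hk0 : (k:ℝ) ≠ 0 := by positivity
      field_simp
    have hprod : Tendsto (fun k : ℕ => ∏ i ∈ Finset.range l, (((jk k : ℝ) - (i:ℝ)) / ((k:ℝ)*r)))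
        atTop (nhds ((E/r)^l)) := by
      have := tendsto_finset_prod (f := fun (i : ℕ) (k : ℕ) => ((jk k : ℝ) - (i:ℝ)) / ((k:ℝ)*r))
        (a := fun _ => E/r) (x := atTop) (Finset.range l) (fun i _ => hfac i)
      simpa [div_pow] using this
    refine hprod.congr' ?_
    filter_upwards [(jk_atTop hE jk hjk).eventually_ge_atTop l, eventually_ge_atTop 1]
      with k hkl hk1
    have hk0 : (0:ℝ) < (k:ℝ) := by exact_mod_cast hk1
    rw [Finset.prod_div_distrib, Finset.prod_const, Finset.card_range, ← my_cast_desc _ _ hkl]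
  have hbound : ∀ᶠ k : ℕ in atTop, ∀ l : ℕ,
      ‖((jk k).descFactorial l : ℝ) / ((k:ℝ)*r)^l‖ ≤ (E/r)^l := by
    filter_upwards [eventually_ge_atTop 1] with k hk1 l
    have hk0 : (0:ℝ) < (k:ℝ) := by exact_mod_cast hk1
    have hkr : (0:ℝ) < (k:ℝ)*r := by positivity
    have hnn : (0:ℝ) ≤ ((jk k).descFactorial l : ℝ) / ((k:ℝ)*r)^l := by positivity
    rw [Real.norm_of_nonneg hnn]
    have hjlt : (jk k : ℝ) < (k:ℝ)*E := (jk_bounds hE jk hjk k hk1).2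
    have h1 : ((jk k).descFactorial l : ℝ) ≤ ((k:ℝ)*E)^l := by
      calc ((jk k).descFactorial l : ℝ) ≤ ((jk k : ℝ))^l := by
            exact_mod_cast Nat.descFactorial_le_pow (jk k) l
        _ ≤ ((k:ℝ)*E)^l := pow_le_pow_left₀ (Nat.cast_nonneg _) hjlt.le l
    have h2 : ((k:ℝ)*E)^l / ((k:ℝ)*r)^l = (E/r)^l := by
      rw [← div_pow, mul_div_mul_left _ _ (ne_of_gt hk0)]
    rw [← h2]
    exact div_le_div_of_nonneg_right h1 (by positivity) |>.trans_eq rfl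
  have key := tendsto_tsum_of_dominated_convergence
    (summable_geometric_of_lt_one hq0 hq1) hab hbound
  rw [tsum_geometric_of_lt_one hq0 hq1] at key
  refine key.congr' ?_
  filter_upwards [eventually_ge_atTop 1] with k hk1
  refine tsum_eq_sum fun b hb => ?_
  rw [Finset.mem_range, not_lt] at hb
  rw [Nat.descFactorial_eq_zero_iff_lt.mpr (by omega)]
  simp

lemma desc_mul_fact {n l : ℕ} (h : l ≤ n) :
    n.descFactorial l * (n - l).factorial = n.factorial := by
  rw [Nat.descFactorial_eq_factorial_mul_choose, mul_comm (Nat.factorial l)]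
  exact Nat.choose_mul_factorial_mul_factorial h

/-- Forbidden-region asymptotics (Bargmann–Fock instance): for `0 < E < r` and
`j_k = ⌈kE⌉ - 1` (the largest integer strictly less than `kE`),
`√(2πkE) (1 - E/r) j_k^{j_k} e^{-j_k} (kr)^{-j_k} ∑_{j=0}^{j_k} (kr)^j/j! → 1`. -/
theorem stmt_8 (E r : ℝ) (hE : 0 < E) (hEr : E < r) (jk : ℕ → ℕ)
    (hjk : ∀ k : ℕ, jk k = ⌈(k : ℝ) * E⌉₊ - 1) :
    Filter.Tendsto
      (fun k : ℕ =>
        Real.sqrt (2 * Real.pi * k * E) * (1 - E / r) * (jk k : ℝ) ^ (jk k) *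
            Real.exp (-(jk k : ℝ)) / ((k : ℝ) * r) ^ (jk k) *
          ∑ i ∈ Finset.range (jk k + 1), ((k : ℝ) * r) ^ i / (Nat.factorial i : ℝ))
      Filter.atTop (nhds 1) := by
  have hr : 0 < r := hE.trans hEr
  have hq : (1 : ℝ) - E / r ≠ 0 := by
    have : E / r < 1 := (div_lt_one hr).mpr hEr
    linarith
  -- the three convergent pieces
  have hsq : Tendsto (fun k : ℕ => Real.sqrt ((k:ℝ) * E / (jk k))) atTop (nhds 1) := by
    have h1 : Tendsto (fun k : ℕ => (k:ℝ) * E / (jk k)) atTop (nhds 1) := by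
      have h2 : Tendsto (fun k : ℕ => E / ((jk k : ℝ) / k)) atTop (nhds 1) := by
        have := (tendsto_const_nhds (α := ℕ) (f := atTop) (x := E)).div
          (jk_div_tendsto hE jk hjk) (ne_of_gt hE)
        rw [div_self (ne_of_gt hE)] at this; exact this
      refine h2.congr' ?_
      filter_upwards [eventually_ge_atTop 1, (jk_atTop hE jk hjk).eventually_ge_atTop 1]
        with k hk1 hj1
      have hk0 : (k:ℝ) ≠ 0 := by positivity
      have hj0 : (jk k : ℝ) ≠ 0 := by
        simp only [ne_eq, Nat.cast_eq_zero]; omega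
      field_simp
    have := (Real.continuous_sqrt.tendsto 1).comp h1
    rw [Real.sqrt_one] at this
    exact this
  have hstir := Filter.Tendsto.comp my_stirling (jk_atTop hE jk hjk)
  have hgeo := geo_tendsto hE hEr jk hjk
  have hmain := ((hsq.mul hstir).mul (tendsto_const_nhds (x := 1 - E/r))).mul hgeo
  rw [show (1:ℝ) * 1 * (1 - E/r) * (1 - E/r)⁻¹ = 1 by rw [one_mul, one_mul, mul_inv_cancel₀ hq]] at hmain
  refine hmain.congr' ?_
  filter_upwards [eventually_ge_atTop 1, (jk_atTop hE jk hjk).eventually_ge_atTop 1]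
    with k hk1 hj1
  have hk0 : (0:ℝ) < (k:ℝ) := by exact_mod_cast hk1
  have hx : (0:ℝ) < (k:ℝ) * r := by positivity
  have hj0 : (0:ℝ) < (jk k : ℝ) := by exact_mod_cast hj1
  set j := jk k with hjdef
  -- rewrite the partial sum
  have hS : ∑ i ∈ Finset.range (j + 1), ((k : ℝ) * r) ^ i / (Nat.factorial i : ℝ)
      = ((k:ℝ)*r)^j / (Nat.factorial j : ℝ) *
        ∑ l ∈ Finset.range (j + 1), ((j.descFactorial l : ℕ) : ℝ) / ((k:ℝ)*r)^l := by
    rw [Finset.mul_sum, ← Finset.sum_range_reflect]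
    refine Finset.sum_congr rfl fun l hl => ?_
    rw [Finset.mem_range, Nat.lt_succ_iff] at hl
    have e1 : ((j.descFactorial l : ℕ) : ℝ) * ((j - l).factorial : ℝ) = (j.factorial : ℝ) := by
      exact_mod_cast congrArg (Nat.cast (R := ℝ)) (desc_mul_fact hl)
    have e2 : ((k:ℝ)*r) ^ (j - l) * ((k:ℝ)*r) ^ l = ((k:ℝ)*r) ^ j :=
      pow_sub_mul_pow _ hl
    have hf1 : ((j - l).factorial : ℝ) ≠ 0 := by exact_mod_cast Nat.factorial_ne_zero _
    have hf2 : ((j).factorial : ℝ) ≠ 0 := by exact_mod_cast Nat.factorial_ne_zero _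
    have hx0 : ((k:ℝ)*r) ≠ 0 := ne_of_gt hx
    rw [show j + 1 - 1 - l = j - l by omega, div_mul_div_comm,
      eq_div_iff (mul_ne_zero hf2 (pow_ne_zero _ hx0)), ← e2, ← e1, div_mul_eq_mul_div, div_eq_iff hf1]
    ring
  rw [hS]
  -- split the sqrt
  have hsplit : Real.sqrt (2 * Real.pi * k * E)
      = Real.sqrt ((k:ℝ) * E / j) * Real.sqrt (2 * Real.pi * j) := by
    rw [← Real.sqrt_mul (by positivity)]
    congr 1
    field_simp
  rw [hsplit]
  have hf2 : ((j).factorial : ℝ) ≠ 0 := by exact_mod_cast Nat.factorial_ne_zero _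
  have hx0 : ((k:ℝ)*r) ^ j ≠ 0 := pow_ne_zero _ (ne_of_gt hx)
  simp only [Function.comp]
  rw [← hjdef]
  field_simp
end geo
end
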